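/- Consistent Cut Vote Safety implies Consistency for Texel: in a system of 3f+1 processes, if two consistent cuts CC1 and CC2 of an execution support values c1 and c2 respectively (i.e., at least 2f+1 processes support ci after their last experiment in CCi), and any process supporting the value of a supporting consistent cut never subsequently performs a reversing experiment, then c1 = c2. -/
import Mathlib


/-- Consistent Cut Vote Safety implies Consistency for Texel.

Processes `P` with `|P| = 3f+1`; experiments `X` run by processes (`proc`), partially
ordered by happened-before `hb`; `rev x` marks reversing experiments; `IsCut` holds of
`hb`-downward-closed sets of reversing experiments; `sup S π` is the value process `π`
supports after its last experiment in cut `S`; a cut `S` supports `c` if at least `2f+1`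
processes support `c` on `S`.  Hypotheses:
* `hsafety` (Consistent Cut Vote Safety): if a cut supports `c`, every reversing experiment
  of a process supporting `c` on that cut already belongs to the cut (i.e. none is run
  subsequently);
* `hchange`: a process whose supported value differs between two cuts must have run a
  reversing experiment lying in one cut but not the other.

Then two supporting consistent cuts support the same value. -/
theorem stmt_11 {P C X : Type*} [Fintype P] [DecidableEq P] [DecidableEq C]
    (f : ℕ) (hf : 0 < f) (hP : Fintype.card P = 3 * f + 1)
    (red blue : C) (hrb : red ≠ blue)
    (proc : X → P) (hb : X → X → Prop) (rev : X → Prop)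
    (IsCut : Set X → Prop)
    (hcut : ∀ S : Set X, IsCut S ↔ ((∀ x ∈ S, rev x) ∧ ∀ x y, rev x → hb x y → y ∈ S → x ∈ S))
    (sup : Set X → P → C)
    (hsafety : ∀ (S : Set X) (c : C), IsCut S →
        2 * f + 1 ≤ (Finset.univ.filter (fun π => sup S π = c)).card →
        ∀ π : P, sup S π = c → ∀ x : X, proc x = π → rev x → x ∈ S)
    (hchange : ∀ (S₁ S₂ : Set X), IsCut S₁ → IsCut S₂ → ∀ π : P, sup S₁ π ≠ sup S₂ π →
        ∃ x : X, rev x ∧ proc x = π ∧ ((x ∈ S₂ ∧ x ∉ S₁) ∨ (x ∈ S₁ ∧ x ∉ S₂)))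
    (S₁ S₂ : Set X) (hS₁ : IsCut S₁) (hS₂ : IsCut S₂) (c₁ c₂ : C)
    (hsup₁ : 2 * f + 1 ≤ (Finset.univ.filter (fun π => sup S₁ π = c₁)).card)
    (hsup₂ : 2 * f + 1 ≤ (Finset.univ.filter (fun π => sup S₂ π = c₂)).card) :
    c₁ = c₂ := by
  by_contra hne
  set A := Finset.univ.filter (fun π => sup S₁ π = c₁) with hA
  set B := Finset.univ.filter (fun π => sup S₂ π = c₂) with hB
  have hinter : (A ∩ B).Nonempty := by
    rw [← Finset.card_pos]
    have h1 : A.card + B.card - Fintype.card P ≤ (A ∩ B).card := by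
      have := Finset.card_union_add_card_inter A B
      have hle : (A ∪ B).card ≤ Fintype.card P := Finset.card_le_univ _
      omega
    have : A.card + B.card - Fintype.card P ≥ 1 := by omega
    omega
  obtain ⟨π, hπ⟩ := hinter
  simp only [Finset.mem_inter, hA, hB, Finset.mem_filter] at hπ
  have h1 : sup S₁ π = c₁ := hπ.1.2
  have h2 : sup S₂ π = c₂ := hπ.2.2
  have hdiff : sup S₁ π ≠ sup S₂ π := by rw [h1, h2]; exact hne
  obtain ⟨x, hxrev, hxproc, hx⟩ := hchange S₁ S₂ hS₁ hS₂ π hdiff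
  have hin1 : x ∈ S₁ := hsafety S₁ c₁ hS₁ hsup₁ π h1 x hxproc hxrev
  have hin2 : x ∈ S₂ := hsafety S₂ c₂ hS₂ hsup₂ π h2 x hxproc hxrev
  rcases hx with ⟨_, h⟩ | ⟨_, h⟩ <;> exact h ‹_›
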